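/- Let X be a proper geodesic metric space, D ≥ 0, and let α be a D-contracting geodesic in X. Then projection to α is coarsely distance decreasing: for any points x₁, x₂ ∈ X and any projection points p₁ ∈ π_{im α}(x₁) and p₂ ∈ π_{im α}(x₂), one has dist(p₁,p₂) ≤ dist(x₁,x₂) + 4D. -/

import Mathlib

/-! Geodesics, quasi-geodesics, projections, contracting and super-contracting
geodesics, and Morse geodesics in a metric space. -/

open Metric Set

section Defs

variable {X : Type*} [MetricSpace X]

/-- `γ` is a geodesic parametrized by `[a,b]`:
`dist (γ s) (γ t) = |s - t|` for all `s, t ∈ [a,b]`. -/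
def IsGeodesicOn (γ : ℝ → X) (a b : ℝ) : Prop :=
  ∀ s ∈ Icc a b, ∀ t ∈ Icc a b, dist (γ s) (γ t) = |s - t|

/-- `X` is a geodesic metric space: every two points are joined by a geodesic. -/
def GeodesicSpace (X : Type*) [MetricSpace X] : Prop :=
  ∀ x y : X, ∃ γ : ℝ → X, IsGeodesicOn γ 0 (dist x y) ∧ γ 0 = x ∧ γ (dist x y) = y

/-- `σ` is a `(lam, eps)`-quasi-geodesic parametrized by `[a,b]`. -/
def IsQuasiGeodesicOn (σ : ℝ → X) (a b lam eps : ℝ) : Prop :=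
  ∀ s ∈ Icc a b, ∀ t ∈ Icc a b,
    (1 / lam) * |s - t| - eps ≤ dist (σ s) (σ t) ∧
      dist (σ s) (σ t) ≤ lam * |s - t| + eps

/-- The projection `π_C(x)`: points of `C` realizing `infDist x C`. -/
def projPt (C : Set X) (x : X) : Set X :=
  {p ∈ C | dist x p = infDist x C}

/-- The map `γ` (with parameter interval `[a,b]`) is `D`-contracting: for any
closed ball `B` disjoint from the image of `γ`, the projection `π_{im γ}(B)`
has diameter at most `D`. -/
def ContractingOn (γ : ℝ → X) (a b D : ℝ) : Prop :=
  ∀ (z : X) (r : ℝ), Disjoint (closedBall z r) (γ '' Icc a b) →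
    ∀ x ∈ closedBall z r, ∀ y ∈ closedBall z r,
      ∀ p ∈ projPt (γ '' Icc a b) x, ∀ q ∈ projPt (γ '' Icc a b) y,
        dist p q ≤ D

/-- `γ` (with parameter interval `[a,b]`) is `D`-super-contracting: every
subsegment of `γ` is `D`-contracting. -/
def SuperContractingOn (γ : ℝ → X) (a b D : ℝ) : Prop :=
  ∀ s t : ℝ, a ≤ s → s ≤ t → t ≤ b → ContractingOn γ s t D

/-- `γ` (with parameter interval `[a,b]`) is `N`-Morse: every
`(lam, eps)`-quasi-geodesic with endpoints on the image of `γ` stays within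
distance `N lam eps` of the image of `γ`. -/
def MorseOn (γ : ℝ → X) (a b : ℝ) (N : ℝ → ℝ → ℝ) : Prop :=
  ∀ lam eps : ℝ, 1 ≤ lam → 0 ≤ eps →
    ∀ (σ : ℝ → X) (c d : ℝ), c ≤ d → IsQuasiGeodesicOn σ c d lam eps →
      σ c ∈ γ '' Icc a b → σ d ∈ γ '' Icc a b →
        ∀ s ∈ Icc c d, infDist (σ s) (γ '' Icc a b) ≤ N lam eps

end Defs

section Aux
variable {X : Type} [MetricSpace X] {A : Set X} {D : ℝ}

/-- Abstract contraction property of a set. -/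
def ContrSet (A : Set X) (D : ℝ) : Prop :=
  ∀ (z : X) (r : ℝ), Disjoint (closedBall z r) A →
    ∀ x ∈ closedBall z r, ∀ y ∈ closedBall z r,
      ∀ p ∈ projPt A x, ∀ q ∈ projPt A y, dist p q ≤ D

lemma same_proj (hD : 0 ≤ D) (hC : ContrSet A D) (x : X)
    {p q : X} (hp : p ∈ projPt A x) (hq : q ∈ projPt A x) : dist p q ≤ D := by
  rcases eq_or_lt_of_le (infDist_nonneg : (0:ℝ) ≤ infDist x A) with h | h
  · have hp0 : x = p := eq_of_dist_eq_zero (by rw [hp.2, ← h])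
    have hq0 : x = q := eq_of_dist_eq_zero (by rw [hq.2, ← h])
    rw [← hp0, ← hq0, dist_self]; exact hD
  · have hx : x ∉ A := by
      intro hxA
      have := infDist_zero_of_mem hxA
      linarith
    have hdisj : Disjoint (closedBall x 0) A := by
      rw [closedBall_zero]; exact Set.disjoint_singleton_left.mpr hx
    exact hC x 0 hdisj x (mem_closedBall_self le_rfl) x (mem_closedBall_self le_rfl) p hp q hq

lemma step_proj (hC : ContrSet A D) {y y' p q : X}
    (h : dist y y' < infDist y A)
    (hp : p ∈ projPt A y) (hq : q ∈ projPt A y') : dist p q ≤ D := by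
  have hdisj : Disjoint (closedBall y (dist y y')) A := by
    rw [Set.disjoint_left]
    intro w hw hwA
    have h1 : infDist y A ≤ dist y w := infDist_le_dist_of_mem hwA
    have h2 : dist w y ≤ dist y y' := mem_closedBall.mp hw
    rw [dist_comm] at h2
    linarith
  exact hC y (dist y y') hdisj y (mem_closedBall_self dist_nonneg)
    y' (mem_closedBall.mpr (by rw [dist_comm])) p hp q hq

lemma far_proj_aux (hD : 0 < D) (hC : ContrSet A D) (hAc : IsCompact A) (hAne : A.Nonempty)
    (σ : ℝ → X) (d : ℝ) :
    ∀ n : ℕ, ∀ c, c ≤ d → d - c ≤ n * D →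
    (∀ s ∈ Icc c d, ∀ t ∈ Icc c d, dist (σ s) (σ t) = |s - t|) →
    (∀ t ∈ Ico c d, D < infDist (σ t) A) →
    ∀ p ∈ projPt A (σ c), ∀ q ∈ projPt A (σ d), dist p q ≤ (d - c) + D := by
  intro n
  induction n with
  | zero =>
    intro c hcd hn hσ hfar p hp q hq
    have hcd' : c = d := le_antisymm hcd (by simpa using hn)
    subst hcd'
    have := same_proj hD.le hC (σ c) hp hq
    linarith
  | succ n ih =>
    intro c hcd hn hσ hfar p hp q hq
    by_cases h1 : d - c ≤ D
    · rcases eq_or_lt_of_le hcd with heq | hlt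
      · subst heq
        have := same_proj hD.le hC (σ c) hp hq
        linarith
      · have hdist : dist (σ c) (σ d) = d - c := by
          rw [hσ c ⟨le_rfl, hcd⟩ d ⟨hcd, le_rfl⟩, abs_sub_comm, abs_of_nonneg (by linarith)]
        have hfc := hfar c ⟨le_rfl, hlt⟩
        have := step_proj hC (by rw [hdist]; linarith) hp hq
        linarith
    · push_neg at h1
      set t := c + D with ht_def
      have ht : t ∈ Icc c d := ⟨by linarith, by linarith⟩
      obtain ⟨qt, hqtA, hqt⟩ := hAc.exists_infDist_eq_dist hAne (σ t)
      have hqt' : qt ∈ projPt A (σ t) := ⟨hqtA, hqt.symm⟩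
      have hdct : dist (σ c) (σ t) = D := by
        rw [hσ c ⟨le_rfl, hcd⟩ t ht, abs_sub_comm]
        simp [ht_def, abs_of_nonneg hD.le]
      have h2 : dist p qt ≤ D := by
        apply step_proj hC _ hp hqt'
        rw [hdct]
        exact hfar c ⟨le_rfl, by linarith⟩
      have h3 : dist qt q ≤ (d - t) + D := by
        apply ih t (by linarith) (by push_cast at hn ⊢; linarith)
          (fun s hs t' ht' => hσ s ⟨by linarith [hs.1], hs.2⟩ t' ⟨by linarith [ht'.1], ht'.2⟩)
          (fun s hs => hfar s ⟨by linarith [hs.1], hs.2⟩) qt hqt' q hq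
      calc dist p q ≤ dist p qt + dist qt q := dist_triangle _ _ _
        _ ≤ (d - c) + D := by linarith

lemma far_proj (hD : 0 < D) (hC : ContrSet A D) (hAc : IsCompact A) (hAne : A.Nonempty)
    (σ : ℝ → X) (c d : ℝ) (hcd : c ≤ d)
    (hσ : ∀ s ∈ Icc c d, ∀ t ∈ Icc c d, dist (σ s) (σ t) = |s - t|)
    (hfar : ∀ t ∈ Ico c d, D < infDist (σ t) A) :
    ∀ p ∈ projPt A (σ c), ∀ q ∈ projPt A (σ d), dist p q ≤ (d - c) + D := by
  obtain ⟨n, hn⟩ := exists_nat_ge ((d - c) / D)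
  exact far_proj_aux hD hC hAc hAne σ d n c hcd
    (by rw [div_le_iff₀ hD] at hn; linarith) hσ hfar

end Aux

lemma contr_main_aux {X : Type} [MetricSpace X] [ProperSpace X] (hgeo : GeodesicSpace X)
    {A : Set X} (hAc : IsCompact A) (hAne : A.Nonempty)
    {D : ℝ} (hD : 0 < D) (hC : ContrSet A D)
    (x₁ x₂ p₁ p₂ : X) (hp₁ : p₁ ∈ projPt A x₁) (hp₂ : p₂ ∈ projPt A x₂) :
    dist p₁ p₂ ≤ dist x₁ x₂ + 4 * D := by
  obtain ⟨σ, hσ, hσ0, hσL⟩ := hgeo x₁ x₂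
  set L := dist x₁ x₂ with hL_def
  have hL : 0 ≤ L := dist_nonneg
  have flip : ∀ s ∈ Icc (0:ℝ) L, ∀ t ∈ Icc (0:ℝ) L,
      infDist (σ s) A ≤ infDist (σ t) A + |s - t| := by
    intro s hs t ht
    have h1 : infDist (σ s) A ≤ infDist (σ t) A + dist (σ s) (σ t) :=
      infDist_le_infDist_add_dist
    rwa [hσ s hs t ht] at h1
  set S : Set ℝ := {t | t ∈ Icc (0:ℝ) L ∧ infDist (σ t) A ≤ D} with hS_def
  by_cases hS : S.Nonempty
  · have hbb : BddBelow S := ⟨0, fun t ht => ht.1.1⟩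
    have hba : BddAbove S := ⟨L, fun t ht => ht.1.2⟩
    set u := sInf S with hu_def
    set v := sSup S with hv_def
    have hu0 : 0 ≤ u := le_csInf hS fun t ht => ht.1.1
    have hvL : v ≤ L := csSup_le hS fun t ht => ht.1.2
    have huv : u ≤ v := csInf_le_csSup hS hbb hba
    have huL : u ≤ L := le_trans huv hvL
    have hv0 : 0 ≤ v := le_trans hu0 huv
    have hfu : infDist (σ u) A ≤ D := by
      apply le_of_forall_pos_le_add
      intro ε hε
      obtain ⟨t, htS, htlt⟩ := (csInf_lt_iff hbb hS).mp (show sInf S < u + ε by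
        rw [← hu_def]; linarith)
      have hut : u ≤ t := csInf_le hbb htS
      have := flip u ⟨hu0, huL⟩ t htS.1
      have habs : |u - t| = t - u := by rw [abs_sub_comm, abs_of_nonneg (by linarith)]
      rw [habs] at this
      linarith [htS.2]
    have hfv : infDist (σ v) A ≤ D := by
      apply le_of_forall_pos_le_add
      intro ε hε
      obtain ⟨t, htS, htlt⟩ := (lt_csSup_iff hba hS).mp (show v - ε < sSup S by
        rw [← hv_def]; linarith)
      have htv : t ≤ v := le_csSup hba htS
      have := flip v ⟨hv0, hvL⟩ t htS.1
      have habs : |v - t| = v - t := abs_of_nonneg (by linarith)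
      rw [habs] at this
      linarith [htS.2]
    have hfaru : ∀ t ∈ Ico (0:ℝ) u, D < infDist (σ t) A := by
      intro t ht
      by_contra h
      push_neg at h
      have : t ∈ S := ⟨⟨ht.1, le_trans ht.2.le huL⟩, h⟩
      exact absurd (csInf_le hbb this) (not_le.mpr ht.2)
    have hfarv : ∀ t ∈ Ioc v L, D < infDist (σ t) A := by
      intro t ht
      by_contra h
      push_neg at h
      have : t ∈ S := ⟨⟨le_trans hv0 ht.1.le, ht.2⟩, h⟩
      exact absurd (le_csSup hba this) (not_le.mpr ht.1)
    obtain ⟨qu, hquA, hqu⟩ := hAc.exists_infDist_eq_dist hAne (σ u)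
    obtain ⟨qv, hqvA, hqv⟩ := hAc.exists_infDist_eq_dist hAne (σ v)
    have hqu' : qu ∈ projPt A (σ u) := ⟨hquA, hqu.symm⟩
    have hqv' : qv ∈ projPt A (σ v) := ⟨hqvA, hqv.symm⟩
    -- left part
    have h1 : dist p₁ qu ≤ u + D := by
      have hp₁' : p₁ ∈ projPt A (σ 0) := by rw [hσ0]; exact hp₁
      have := far_proj hD hC hAc hAne σ 0 u hu0
        (fun s hs t ht => hσ s ⟨hs.1, le_trans hs.2 huL⟩ t ⟨ht.1, le_trans ht.2 huL⟩)
        hfaru p₁ hp₁' qu hqu'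
      linarith
    -- middle part
    have h2 : dist qu qv ≤ (v - u) + 2 * D := by
      have hduv : dist (σ u) (σ v) = v - u := by
        rw [hσ u ⟨hu0, huL⟩ v ⟨hv0, hvL⟩, abs_sub_comm, abs_of_nonneg (by linarith)]
      have e1 : dist qu (σ u) ≤ D := by rw [dist_comm, ← hqu]; exact hfu
      have e2 : dist (σ v) qv ≤ D := by rw [← hqv]; exact hfv
      calc dist qu qv ≤ dist qu (σ u) + dist (σ u) (σ v) + dist (σ v) qv :=
            dist_triangle4 _ _ _ _
        _ ≤ (v - u) + 2 * D := by rw [hduv]; linarith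
    -- right part, reversed geodesic
    have h3 : dist qv p₂ ≤ (L - v) + D := by
      set τ : ℝ → X := fun t => σ (v + L - t) with hτ_def
      have hmem : ∀ s ∈ Icc v L, v + L - s ∈ Icc (0:ℝ) L := by
        intro s hs
        constructor <;> [linarith [hs.2]; linarith [hs.1]]
      have hτσ : ∀ s ∈ Icc v L, ∀ t ∈ Icc v L, dist (τ s) (τ t) = |s - t| := by
        intro s hs t ht
        have := hσ (v + L - s) (hmem s hs) (v + L - t) (hmem t ht)
        rw [hτ_def]
        simp only []
        rw [this, abs_sub_comm]
        congr 1
        ring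
      have hτfar : ∀ t ∈ Ico v L, D < infDist (τ t) A := by
        intro t ht
        apply hfarv
        constructor <;> [linarith [ht.2]; linarith [ht.1]]
      have hτv : τ v = x₂ := by
        rw [hτ_def]; simp only []
        have : v + L - v = L := by ring
        rw [this, hσL]
      have hτL : τ L = σ v := by
        rw [hτ_def]; simp only []
        congr 1; ring
      have hp₂' : p₂ ∈ projPt A (τ v) := by rw [hτv]; exact hp₂
      have hqv'' : qv ∈ projPt A (τ L) := by rw [hτL]; exact hqv'
      have := far_proj hD hC hAc hAne τ v L hvL hτσ hτfar p₂ hp₂' qv hqv''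
      rw [dist_comm]
      linarith
    calc dist p₁ p₂ ≤ dist p₁ qu + dist qu qv + dist qv p₂ := dist_triangle4 _ _ _ _
      _ ≤ L + 4 * D := by linarith
  · have hfar : ∀ t ∈ Ico (0:ℝ) L, D < infDist (σ t) A := by
      intro t ht
      by_contra h
      push_neg at h
      exact hS ⟨t, ⟨⟨ht.1, ht.2.le⟩, h⟩⟩
    have hp₁' : p₁ ∈ projPt A (σ 0) := by rw [hσ0]; exact hp₁
    have hp₂' : p₂ ∈ projPt A (σ L) := by rw [hσL]; exact hp₂
    have := far_proj hD hC hAc hAne σ 0 L hL hσ hfar p₁ hp₁' p₂ hp₂'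
    linarith

/-- projection to a `D`-contracting geodesic in a proper geodesic
metric space is coarsely distance decreasing:
`dist p₁ p₂ ≤ dist x₁ x₂ + 4D`. -/
theorem contracting_proj_coarsely_distance_decreasing {X : Type} [MetricSpace X]
    [ProperSpace X] (hgeo : GeodesicSpace X) (D : ℝ) (hD : 0 ≤ D)
    (α : ℝ → X) (a b : ℝ) (hab : a ≤ b)
    (hα : IsGeodesicOn α a b) (hcon : ContractingOn α a b D)
    (x₁ x₂ : X) (p₁ p₂ : X)
    (hp₁ : p₁ ∈ projPt (α '' Set.Icc a b) x₁)
    (hp₂ : p₂ ∈ projPt (α '' Set.Icc a b) x₂) :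
    dist p₁ p₂ ≤ dist x₁ x₂ + 4 * D := by
  set A := α '' Set.Icc a b with hA_def
  have hlip : LipschitzOnWith 1 α (Set.Icc a b) := by
    rw [lipschitzOnWith_iff_dist_le_mul]
    intro x hx y hy
    rw [hα x hx y hy, Real.dist_eq]
    simp
  have hAc : IsCompact A := isCompact_Icc.image_of_continuousOn hlip.continuousOn
  have hAne : A.Nonempty := ⟨α a, a, ⟨le_rfl, hab⟩, rfl⟩
  apply le_of_forall_pos_le_add
  intro ε hε
  have hC : ContrSet A (D + ε / 4) := by
    intro z r hdisj x hx y hy p hp q hq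
    exact (hcon z r hdisj x hx y hy p hp q hq).trans (by linarith)
  have := contr_main_aux hgeo hAc hAne (show (0:ℝ) < D + ε / 4 by linarith) hC
    x₁ x₂ p₁ p₂ hp₁ hp₂
  linarith
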